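/- Main convergence theorem (static reference): Let G = (V,E) be a finite digraph, F ∈ ℕ, A an F-local adversary set, L the leader set, N = V \ (L ∪ A) the normal agents. Suppose G is strongly (2F+1)-robust with respect to L. Let the normal agents update by W-MSR with parameter F with all weights bounded below by α ∈ (0,1), leaders hold the constant value C_L for all t ≥ t_C, and adversarial agents send arbitrary values. Then for every normal agent i, x_i(t) → C_L as t → ∞. -/

import Mathlib

/-- One-sided bound: eventually all normal states are below `CL + ε`. -/
theorem wmsr_upper_aux {V : Type*} [Fintype V] [DecidableEq V]
    (F : ℕ) (α : ℝ) (hα0 : 0 < α) (hα1 : α < 1)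
    (L A : Finset V) (inb : V → Finset V)
    (x : ℕ → V → ℝ) (y : ℕ → V → V → ℝ) (CL : ℝ) (tC : ℕ)
    (hrobust : ∀ C : Finset V, C ⊆ Finset.univ \ L → C.Nonempty →
      ∃ i ∈ C, 2 * F + 1 ≤ ((inb i) \ C).card)
    (hlocal : ∀ i ∈ Finset.univ \ (L ∪ A), ((inb i) ∩ A).card ≤ F)
    (hy : ∀ t : ℕ, ∀ i j : V, j ∉ A → y t i j = x t j)
    (hldr : ∀ i ∈ L, ∀ t, tC ≤ t → x t i = CL)
    (hupdate : ∀ i ∈ Finset.univ \ (L ∪ A), ∀ t : ℕ,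
      ∃ (Dhi Dlo : Finset V) (w : V → ℝ),
        Dhi ⊆ (inb i).filter (fun j => x t i < y t i j) ∧
        Dhi.card = min F (((inb i).filter (fun j => x t i < y t i j)).card) ∧
        (∀ j ∈ (inb i).filter (fun j => x t i < y t i j) \ Dhi,
          ∀ b ∈ Dhi, y t i j ≤ y t i b) ∧
        Dlo ⊆ (inb i).filter (fun j => y t i j < x t i) ∧
        Dlo.card = min F (((inb i).filter (fun j => y t i j < x t i)).card) ∧
        (∀ j ∈ (inb i).filter (fun j => y t i j < x t i) \ Dlo,
          ∀ b ∈ Dlo, y t i b ≤ y t i j) ∧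
        (∀ j ∈ insert i ((inb i) \ (Dhi ∪ Dlo)), α ≤ w j) ∧
        (∑ j ∈ insert i ((inb i) \ (Dhi ∪ Dlo)), w j = 1) ∧
        x (t + 1) i = ∑ j ∈ insert i ((inb i) \ (Dhi ∪ Dlo)), w j * y t i j)
    (hN : (Finset.univ \ (L ∪ A) : Finset V).Nonempty) :
    ∀ ε : ℝ, 0 < ε → ∃ T : ℕ, ∀ t, T ≤ t →
      ∀ i ∈ Finset.univ \ (L ∪ A), x t i < CL + ε := by
  classical
  set N : Finset V := Finset.univ \ (L ∪ A) with hNdef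
  obtain ⟨M, hMdef⟩ : ∃ M : ℕ → ℝ, ∀ t, M t = max CL (N.sup' hN (x t)) :=
    ⟨_, fun _ => rfl⟩
  have hmemN : ∀ i : V, i ∈ N ↔ (i ∉ L ∧ i ∉ A) := by
    intro i
    simp [hNdef, Finset.mem_sdiff, Finset.mem_union, not_or]
  have hixM : ∀ t, ∀ i ∈ N, x t i ≤ M t := by
    intro t i hi
    rw [hMdef]
    exact le_max_of_le_right (Finset.le_sup' _ hi)
  have hCLM : ∀ t, CL ≤ M t := by
    intro t; rw [hMdef]; exact le_max_left _ _
  -- Key lemma: every value not removed by the high-filter is at most M t.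
  have hkey : ∀ t, tC ≤ t → ∀ i ∈ N, ∀ Dhi : Finset V,
      Dhi ⊆ (inb i).filter (fun j => x t i < y t i j) →
      Dhi.card = min F (((inb i).filter (fun j => x t i < y t i j)).card) →
      (∀ j ∈ (inb i).filter (fun j => x t i < y t i j) \ Dhi,
        ∀ b ∈ Dhi, y t i j ≤ y t i b) →
      ∀ j ∈ inb i, j ∉ Dhi → y t i j ≤ M t := by
    intro t ht i hi Dhi hsub hcard hmax j hj hjD
    by_contra hgt
    push_neg at hgt
    set S := (inb i).filter (fun j => x t i < y t i j) with hSdef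
    have hjS : j ∈ S := Finset.mem_filter.2 ⟨hj, lt_of_le_of_lt (hixM t i hi) hgt⟩
    have hcardF : Dhi.card = F := by
      rcases le_or_gt S.card F with h | h
      · have heq : Dhi = S := Finset.eq_of_subset_of_card_le hsub (by omega)
        exact absurd (heq ▸ hjS) hjD
      · omega
    have hAll : insert j Dhi ⊆ (inb i) ∩ A := by
      intro k hk
      have hky : M t < y t i k := by
        rcases Finset.mem_insert.1 hk with rfl | hkD
        · exact hgt
        · exact lt_of_lt_of_le hgt (hmax j (Finset.mem_sdiff.2 ⟨hjS, hjD⟩) k hkD)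
      have hkinb : k ∈ inb i := by
        rcases Finset.mem_insert.1 hk with rfl | hkD
        · exact hj
        · exact (Finset.mem_filter.1 (hsub hkD)).1
      have hkA : k ∈ A := by
        by_contra hkA
        have hxk := hy t i k hkA
        by_cases hkL : k ∈ L
        · rw [hxk, hldr k hkL t ht] at hky
          exact absurd hky (not_lt.2 (hCLM t))
        · have hkN : k ∈ N := (hmemN k).2 ⟨hkL, hkA⟩
          rw [hxk] at hky
          exact absurd hky (not_lt.2 (hixM t k hkN))
      exact Finset.mem_inter.2 ⟨hkinb, hkA⟩
    have hc1 : (insert j Dhi).card = F + 1 := by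
      rw [Finset.card_insert_of_notMem hjD, hcardF]
    have hc2 := Finset.card_le_card hAll
    have := hlocal i hi
    omega
  -- Workhorse step bound.
  have hstep : ∀ t, tC ≤ t → ∀ B, M t ≤ B → ∀ θ, θ ≤ B → ∀ i ∈ N,
      (x t i ≤ θ ∨ (θ < x t i ∧
        F + 1 ≤ ((inb i).filter (fun j => y t i j ≤ θ)).card)) →
      x (t + 1) i ≤ α * θ + (1 - α) * B := by
    intro t ht B hMB θ hθB i hi hcase
    obtain ⟨Dhi, Dlo, w, h1, h2, h3, h4, h5, h6, h7, h8, h9⟩ := hupdate i hi t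
    set T : Finset V := insert i ((inb i) \ (Dhi ∪ Dlo)) with hTdef
    have hiA : i ∉ A := ((hmemN i).1 hi).2
    have hvM : ∀ k ∈ T, y t i k ≤ M t := by
      intro k hk
      rcases Finset.mem_insert.1 hk with rfl | hk'
      · rw [hy t k k hiA]; exact hixM t k hi
      · obtain ⟨hkinb, hknot⟩ := Finset.mem_sdiff.1 hk'
        exact hkey t ht i hi Dhi h1 h2 h3 k hkinb
          (fun h => hknot (Finset.mem_union_left _ h))
    have hw0 : ∀ k ∈ T, 0 ≤ w k := fun k hk => le_of_lt (lt_of_lt_of_le hα0 (h7 k hk))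
    -- find a retained index j0 with value ≤ θ
    obtain ⟨j0, hj0T, hvj0⟩ : ∃ j0 ∈ T, y t i j0 ≤ θ := by
      rcases hcase with hle | ⟨hθx, hcard⟩
      · refine ⟨i, Finset.mem_insert_self _ _, ?_⟩
        rw [hy t i i hiA]; exact hle
      · set Q := (inb i).filter (fun j => y t i j ≤ θ) with hQdef
        have hDlocard : Dlo.card ≤ F := by
          rw [h5]; exact min_le_left _ _
        have hnots : ¬ Q ⊆ Dlo := by
          intro hss
          have := Finset.card_le_card hss
          omega
        obtain ⟨j0, hj0Q, hj0Dlo⟩ := Finset.not_subset.1 hnots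
        obtain ⟨hj0inb, hj0val⟩ := Finset.mem_filter.1 hj0Q
        have hj0Dhi : j0 ∉ Dhi := by
          intro hmem
          have := (Finset.mem_filter.1 (h1 hmem)).2
          linarith
        refine ⟨j0, ?_, hj0val⟩
        exact Finset.mem_insert_of_mem (Finset.mem_sdiff.2
          ⟨hj0inb, fun h => (Finset.mem_union.1 h).elim hj0Dhi hj0Dlo⟩)
    -- sum manipulation
    have e1 : ∑ j ∈ T, w j * y t i j
        = w j0 * y t i j0 + ∑ j ∈ T.erase j0, w j * y t i j :=
      (Finset.add_sum_erase T _ hj0T).symm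
    have e2 : ∑ j ∈ T.erase j0, w j = 1 - w j0 := by
      have := Finset.add_sum_erase T w hj0T
      rw [h8] at this
      linarith
    have e3 : ∑ j ∈ T.erase j0, w j * y t i j ≤ ∑ j ∈ T.erase j0, w j * B := by
      refine Finset.sum_le_sum fun k hk => ?_
      exact mul_le_mul_of_nonneg_left
        (le_trans (hvM k (Finset.mem_of_mem_erase hk)) hMB)
        (hw0 k (Finset.mem_of_mem_erase hk))
    have e4 : ∑ j ∈ T.erase j0, w j * B = (1 - w j0) * B := by
      rw [← Finset.sum_mul, e2]
    have e5 : w j0 * y t i j0 ≤ w j0 * θ :=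
      mul_le_mul_of_nonneg_left hvj0 (hw0 j0 hj0T)
    have hwj0 : α ≤ w j0 := h7 j0 hj0T
    have key1 : x (t + 1) i ≤ w j0 * θ + (1 - w j0) * B := by
      rw [h9, e1]
      linarith
    nlinarith [key1, hwj0, hθB]
  -- Monotone decrease of M.
  have hMdec : ∀ t, tC ≤ t → M (t + 1) ≤ M t := by
    intro t ht
    have hb : ∀ i ∈ N, x (t + 1) i ≤ M t := by
      intro i hi
      have h := hstep t ht (M t) le_rfl (M t) le_rfl i hi (Or.inl (hixM t i hi))
      nlinarith
    rw [hMdef (t + 1)]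
    exact max_le (hCLM t) (Finset.sup'_le hN _ hb)
  have hMmono : ∀ s, tC ≤ s → ∀ t, s ≤ t → M t ≤ M s := by
    intro s hs t hst
    induction t, hst using Nat.le_induction with
    | base => exact le_rfl
    | succ t hst ih => exact le_trans (hMdec t (le_trans hs hst)) ih
  -- Contraction by induction.
  have hcontract : ∀ c : ℕ, ∀ t, tC ≤ t → ∀ B, M t ≤ B → ∀ θ, CL ≤ θ → θ ≤ B →
      (N.filter (fun i => θ < x t i)).card ≤ c →
      ∀ i ∈ N, x (t + c) i ≤ α ^ c * θ + (1 - α ^ c) * B := by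
    intro c
    induction c with
    | zero =>
      intro t ht B hB θ hCLθ hθB hcard i hi
      have hne : i ∉ N.filter (fun i => θ < x t i) := by
        rw [Finset.card_eq_zero.1 (Nat.le_zero.1 hcard)]
        exact Finset.notMem_empty i
      have hxθ : x t i ≤ θ := le_of_not_gt fun h => hne (Finset.mem_filter.2 ⟨hi, h⟩)
      have : (α : ℝ) ^ 0 * θ + (1 - α ^ 0) * B = θ := by ring
      rw [this]
      exact hxθ
    | succ c ih =>
      intro t ht B hB θ hCLθ hθB hcard i hi
      set Cset := N.filter (fun i => θ < x t i) with hCdef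
      set θ' := α * θ + (1 - α) * B with hθ'def
      have hCLB : CL ≤ B := le_trans (hCLM t) hB
      have hθ'CL : CL ≤ θ' := by rw [hθ'def]; nlinarith
      have hθ'B : θ' ≤ B := by rw [hθ'def]; nlinarith
      have hout : ∀ k ∈ N, k ∉ Cset → x (t + 1) k ≤ θ' := by
        intro k hk hkC
        have hxk : x t k ≤ θ :=
          le_of_not_gt fun h => hkC (Finset.mem_filter.2 ⟨hk, h⟩)
        exact hstep t ht B hB θ hθB k hk (Or.inl hxk)
      have hsubC : N.filter (fun j => θ' < x (t + 1) j) ⊆ Cset := by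
        intro k hk
        obtain ⟨hkN, hkgt⟩ := Finset.mem_filter.1 hk
        by_contra hkC
        exact absurd hkgt (not_lt.2 (hout k hkN hkC))
      have hC' : (N.filter (fun j => θ' < x (t + 1) j)).card ≤ c := by
        by_cases hCe : Cset.Nonempty
        · have hCsub : Cset ⊆ Finset.univ \ L := by
            intro k hk
            have hkN := (Finset.mem_filter.1 hk).1
            exact Finset.mem_sdiff.2 ⟨Finset.mem_univ _, ((hmemN k).1 hkN).1⟩
          obtain ⟨i0, hi0C, hi0r⟩ := hrobust Cset hCsub hCe
          have hi0N : i0 ∈ N := (Finset.mem_filter.1 hi0C).1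
          have hθx : θ < x t i0 := (Finset.mem_filter.1 hi0C).2
          -- count non-adversarial in-neighbors outside Cset
          have hsubQ : (inb i0 \ Cset) \ A ⊆
              (inb i0).filter (fun j => y t i0 j ≤ θ) := by
            intro k hk
            obtain ⟨hk1, hkA⟩ := Finset.mem_sdiff.1 hk
            obtain ⟨hkinb, hkC⟩ := Finset.mem_sdiff.1 hk1
            have hyk : y t i0 k = x t k := hy t i0 k hkA
            refine Finset.mem_filter.2 ⟨hkinb, ?_⟩
            rw [hyk]
            by_cases hkL : k ∈ L
            · rw [hldr k hkL t ht]; exact hCLθ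
            · have hkN : k ∈ N := (hmemN k).2 ⟨hkL, hkA⟩
              exact le_of_not_gt fun h => hkC (Finset.mem_filter.2 ⟨hkN, h⟩)
          have hcardQ : F + 1 ≤ ((inb i0).filter (fun j => y t i0 j ≤ θ)).card := by
            have hsplit := Finset.card_sdiff_add_card_inter (inb i0 \ Cset) A
            have hinter : (inb i0 \ Cset) ∩ A ⊆ inb i0 ∩ A := by
              intro k hk
              obtain ⟨hk1, hk2⟩ := Finset.mem_inter.1 hk
              exact Finset.mem_inter.2 ⟨(Finset.mem_sdiff.1 hk1).1, hk2⟩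
            have h2 := Finset.card_le_card hinter
            have h3 := hlocal i0 hi0N
            have h4 := Finset.card_le_card hsubQ
            omega
          have hx1 : x (t + 1) i0 ≤ θ' := by
            have := hstep t ht B hB θ hθB i0 hi0N (Or.inr ⟨hθx, hcardQ⟩)
            rw [hθ'def]
            exact this
          have hsub2 : N.filter (fun j => θ' < x (t + 1) j) ⊆ Cset.erase i0 := by
            intro k hk
            refine Finset.mem_erase.2 ⟨?_, hsubC hk⟩
            rintro rfl
            exact absurd (Finset.mem_filter.1 hk).2 (not_lt.2 hx1)
          have h5 := Finset.card_le_card hsub2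
          have h6 := Finset.card_erase_of_mem hi0C
          have h7 : 1 ≤ Cset.card := Finset.card_pos.2 hCe
          omega
        · have hCe' : Cset = ∅ := Finset.not_nonempty_iff_eq_empty.1 hCe
          have h5 := Finset.card_le_card hsubC
          rw [hCe', Finset.card_empty] at h5
          omega
      have hM1 : M (t + 1) ≤ B := le_trans (hMdec t ht) hB
      have happ := ih (t + 1) (le_trans ht (Nat.le_succ t)) B hM1 θ' hθ'CL hθ'B hC' i hi
      have heq : t + 1 + c = t + (c + 1) := by omega
      rw [heq] at happ
      have harith : α ^ c * θ' + (1 - α ^ c) * B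
          = α ^ (c + 1) * θ + (1 - α ^ (c + 1)) * B := by
        rw [hθ'def]; ring
      rw [harith] at happ
      exact happ
  -- iterate the contraction
  set n := N.card with hndef
  have hn1 : 1 ≤ n := Finset.card_pos.2 hN
  have hδ0 : (0:ℝ) ≤ 1 - α ^ n := by
    have := pow_le_one₀ (le_of_lt hα0) (le_of_lt hα1) (n := n)
    linarith
  have hδ1 : (1:ℝ) - α ^ n < 1 := by
    have := pow_pos hα0 n
    linarith
  have hmain : ∀ t, tC ≤ t → M (t + n) ≤ CL + (1 - α ^ n) * (M t - CL) := by
    intro t ht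
    have hcardN : (N.filter (fun i => CL < x t i)).card ≤ n := by
      exact Finset.card_le_card (Finset.filter_subset _ _)
    have hall := hcontract n t ht (M t) le_rfl CL le_rfl (hCLM t) hcardN
    have hb : ∀ i ∈ N, x (t + n) i ≤ CL + (1 - α ^ n) * (M t - CL) := by
      intro i hi
      have := hall i hi
      nlinarith
    rw [hMdef (t + n)]
    refine max_le ?_ (Finset.sup'_le hN _ hb)
    nlinarith [hCLM t]
  have hiter : ∀ k : ℕ, M (tC + k * n) - CL ≤ (1 - α ^ n) ^ k * (M tC - CL) := by
    intro k
    induction k with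
    | zero => simp
    | succ k ih =>
      have heq : tC + (k + 1) * n = (tC + k * n) + n := by ring
      rw [heq]
      have ht' : tC ≤ tC + k * n := Nat.le_add_right _ _
      have h1 := hmain (tC + k * n) ht'
      have h2 : (1 - α ^ n) * (M (tC + k * n) - CL)
          ≤ (1 - α ^ n) * ((1 - α ^ n) ^ k * (M tC - CL)) :=
        mul_le_mul_of_nonneg_left ih hδ0
      have h3 : (1 - α ^ n) * ((1 - α ^ n) ^ k * (M tC - CL))
          = (1 - α ^ n) ^ (k + 1) * (M tC - CL) := by ring
      linarith
  -- conclude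
  intro ε hε
  set D := M tC - CL with hDdef
  have hD0 : 0 ≤ D := by rw [hDdef]; linarith [hCLM tC]
  obtain ⟨k, hk⟩ := exists_pow_lt_of_lt_one (show (0:ℝ) < ε / (D + 1) by positivity) hδ1
  have hpk : (0:ℝ) ≤ (1 - α ^ n) ^ k := pow_nonneg hδ0 k
  have hfin : (1 - α ^ n) ^ k * D < ε := by
    have h1 : (1 - α ^ n) ^ k * (D + 1) < (ε / (D + 1)) * (D + 1) := by
      apply mul_lt_mul_of_pos_right hk
      linarith
    rw [div_mul_cancel₀] at h1
    · nlinarith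
    · linarith
  refine ⟨tC + k * n, fun t ht i hi => ?_⟩
  have h1 : M t ≤ M (tC + k * n) := hMmono (tC + k * n) (Nat.le_add_right _ _) t ht
  have h2 := hiter k
  have h3 := hixM t i hi
  linarith

/-- Theorem 2 (main convergence theorem, static reference): in a digraph that
is strongly (2F+1)-robust w.r.t. the leader set L, with an F-local adversary
set A, leaders holding the constant value C_L for t ≥ t_C, and normal agents
(V \ (L ∪ A)) updating by W-MSR with parameter F and weights bounded below by
α ∈ (0,1) (adversaries sending arbitrary, possibly Byzantine, values y), every
normal agent's state converges to C_L. -/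
theorem wmsr_consensus_tracking {V : Type*} [Fintype V] [DecidableEq V]
    (F : ℕ) (α : ℝ) (hα0 : 0 < α) (hα1 : α < 1)
    (L A : Finset V) (inb : V → Finset V)
    (x : ℕ → V → ℝ) (y : ℕ → V → V → ℝ) (CL : ℝ) (tC : ℕ)
    (hrobust : ∀ C : Finset V, C ⊆ Finset.univ \ L → C.Nonempty →
      ∃ i ∈ C, 2 * F + 1 ≤ ((inb i) \ C).card)
    (hlocal : ∀ i ∈ Finset.univ \ (L ∪ A), ((inb i) ∩ A).card ≤ F)
    (hy : ∀ t : ℕ, ∀ i j : V, j ∉ A → y t i j = x t j)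
    (hldr : ∀ i ∈ L, ∀ t, tC ≤ t → x t i = CL)
    (hupdate : ∀ i ∈ Finset.univ \ (L ∪ A), ∀ t : ℕ,
      ∃ (Dhi Dlo : Finset V) (w : V → ℝ),
        Dhi ⊆ (inb i).filter (fun j => x t i < y t i j) ∧
        Dhi.card = min F (((inb i).filter (fun j => x t i < y t i j)).card) ∧
        (∀ j ∈ (inb i).filter (fun j => x t i < y t i j) \ Dhi,
          ∀ b ∈ Dhi, y t i j ≤ y t i b) ∧
        Dlo ⊆ (inb i).filter (fun j => y t i j < x t i) ∧
        Dlo.card = min F (((inb i).filter (fun j => y t i j < x t i)).card) ∧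
        (∀ j ∈ (inb i).filter (fun j => y t i j < x t i) \ Dlo,
          ∀ b ∈ Dlo, y t i b ≤ y t i j) ∧
        (∀ j ∈ insert i ((inb i) \ (Dhi ∪ Dlo)), α ≤ w j) ∧
        (∑ j ∈ insert i ((inb i) \ (Dhi ∪ Dlo)), w j = 1) ∧
        x (t + 1) i = ∑ j ∈ insert i ((inb i) \ (Dhi ∪ Dlo)), w j * y t i j) :
    ∀ i ∈ Finset.univ \ (L ∪ A),
      Filter.Tendsto (fun t => x t i) Filter.atTop (nhds CL) := by
  classical
  intro i hi
  have hN : (Finset.univ \ (L ∪ A) : Finset V).Nonempty := ⟨i, hi⟩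
  -- the negated system also satisfies all the hypotheses
  have hy' : ∀ t : ℕ, ∀ i j : V, j ∉ A → -(y t i j) = -(x t j) := by
    intro t i j hj; rw [hy t i j hj]
  have hldr' : ∀ i ∈ L, ∀ t, tC ≤ t → -(x t i) = -CL := by
    intro i hi t ht; rw [hldr i hi t ht]
  have hupdate' : ∀ i ∈ Finset.univ \ (L ∪ A), ∀ t : ℕ,
      ∃ (Dhi Dlo : Finset V) (w : V → ℝ),
        Dhi ⊆ (inb i).filter (fun j => -(x t i) < -(y t i j)) ∧
        Dhi.card = min F (((inb i).filter (fun j => -(x t i) < -(y t i j))).card) ∧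
        (∀ j ∈ (inb i).filter (fun j => -(x t i) < -(y t i j)) \ Dhi,
          ∀ b ∈ Dhi, -(y t i j) ≤ -(y t i b)) ∧
        Dlo ⊆ (inb i).filter (fun j => -(y t i j) < -(x t i)) ∧
        Dlo.card = min F (((inb i).filter (fun j => -(y t i j) < -(x t i))).card) ∧
        (∀ j ∈ (inb i).filter (fun j => -(y t i j) < -(x t i)) \ Dlo,
          ∀ b ∈ Dlo, -(y t i b) ≤ -(y t i j)) ∧
        (∀ j ∈ insert i ((inb i) \ (Dhi ∪ Dlo)), α ≤ w j) ∧
        (∑ j ∈ insert i ((inb i) \ (Dhi ∪ Dlo)), w j = 1) ∧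
        -(x (t + 1) i) = ∑ j ∈ insert i ((inb i) \ (Dhi ∪ Dlo)), w j * -(y t i j) := by
    intro i hi t
    obtain ⟨Dhi, Dlo, w, h1, h2, h3, h4, h5, h6, h7, h8, h9⟩ := hupdate i hi t
    refine ⟨Dlo, Dhi, w, ?_, ?_, ?_, ?_, ?_, ?_, ?_, ?_, ?_⟩
    · simpa only [neg_lt_neg_iff] using h4
    · simpa only [neg_lt_neg_iff] using h5
    · simpa only [neg_lt_neg_iff, neg_le_neg_iff] using h6
    · simpa only [neg_lt_neg_iff] using h1
    · simpa only [neg_lt_neg_iff] using h2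
    · simpa only [neg_lt_neg_iff, neg_le_neg_iff] using h3
    · rw [Finset.union_comm Dlo Dhi]; exact h7
    · rw [Finset.union_comm Dlo Dhi]; exact h8
    · rw [Finset.union_comm Dlo Dhi, h9]
      simp only [mul_neg, Finset.sum_neg_distrib]
  rw [Metric.tendsto_atTop]
  intro ε hε
  obtain ⟨T1, hT1⟩ := wmsr_upper_aux F α hα0 hα1 L A inb x y CL tC
    hrobust hlocal hy hldr hupdate hN ε hε
  obtain ⟨T2, hT2⟩ := wmsr_upper_aux F α hα0 hα1 L A inb
    (fun t i => -(x t i)) (fun t i j => -(y t i j)) (-CL) tC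
    hrobust hlocal hy' hldr' hupdate' hN ε hε
  refine ⟨max T1 T2, fun t ht => ?_⟩
  have h1 := hT1 t (le_trans (le_max_left _ _) ht) i hi
  have h2 := hT2 t (le_trans (le_max_right _ _) ht) i hi
  rw [Real.dist_eq, abs_sub_lt_iff]
  constructor <;> [linarith; · linarith]
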